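/- Let A₀, A₁ be n×n real matrices, λ ∈ [0,1], and β ∈ (0,1]. Suppose there exists a symmetric positive definite n×n matrix Ξ such that Ξ - β(λA₁ΞA₁ᵀ + (1-λ)A₀ΞA₀ᵀ) is positive definite. Then the n²×n² real matrix I - β(λ·A₁⊗A₁ + (1-λ)·A₀⊗A₀), where ⊗ denotes the Kronecker product, is invertible. -/

import Mathlib

open Matrix Kronecker


variable {m : Type*} [Fintype m]

lemma quad_smul (S : Matrix m m ℝ) (c : ℝ) (x : m → ℝ) :
    (c • x) ⬝ᵥ S *ᵥ (c • x) = c ^ 2 * (x ⬝ᵥ S *ᵥ x) := by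
  rw [mulVec_smul, dotProduct_smul, smul_dotProduct]
  simp [smul_eq_mul]; ring

lemma herm_smul {P : Matrix m m ℝ} (hP : P.IsHermitian) (c : ℝ) :
    (c • P).IsHermitian := by
  unfold Matrix.IsHermitian at *
  rw [conjTranspose_smul, hP]; simp

lemma psd_smul {P : Matrix m m ℝ} (hP : P.PosSemidef) {c : ℝ} (hc : 0 ≤ c) :
    (c • P).PosSemidef := by
  refine posSemidef_iff_dotProduct_mulVec.mpr ⟨herm_smul hP.1 c, fun x => ?_⟩
  rw [smul_mulVec, dotProduct_smul]
  exact mul_nonneg hc (by simpa using hP.dotProduct_mulVec_nonneg x)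

lemma quad_continuous (S : Matrix m m ℝ) : Continuous fun x : m → ℝ => x ⬝ᵥ S *ᵥ x := by
  simp only [dotProduct, mulVec]
  fun_prop

lemma lemA (P S : Matrix m m ℝ) (hP : P.PosDef) (hS : S.IsHermitian) :
    ∃ t : ℝ, 0 < t ∧ (t • P - S).PosSemidef := by
  rcases isEmpty_or_nonempty m with hm | hm
  · refine ⟨1, one_pos, ?_⟩
    rw [Subsingleton.elim ((1:ℝ) • P - S) (0 : Matrix m m ℝ)]
    exact Matrix.PosSemidef.zero
  · have hcomp : IsCompact (Metric.sphere (0 : m → ℝ) 1) := isCompact_sphere 0 1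
    have hne : (Metric.sphere (0 : m → ℝ) 1).Nonempty :=
      NormedSpace.sphere_nonempty.mpr zero_le_one
    obtain ⟨u, hu, hgu⟩ := hcomp.exists_isMinOn hne ((quad_continuous P).continuousOn)
    obtain ⟨w, hw, hfw⟩ := hcomp.exists_isMaxOn hne ((quad_continuous S).continuousOn)
    set g := fun x : m → ℝ => x ⬝ᵥ P *ᵥ x with hg
    set f := fun x : m → ℝ => x ⬝ᵥ S *ᵥ x with hf
    have hu0 : u ≠ 0 := by
      intro h; rw [h] at hu; simp at hu
    have hgu0 : 0 < g u := by simpa using hP.dotProduct_mulVec_pos hu0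
    set t : ℝ := max (f w / g u) 1 with ht
    have ht0 : 0 < t := lt_of_lt_of_le one_pos (le_max_right _ _)
    have key : ∀ x : m → ℝ, x ∈ Metric.sphere (0 : m → ℝ) 1 → f x ≤ t * g x := by
      intro x hx
      have h1 : f x ≤ f w := hfw hx
      have h2 : g u ≤ g x := hgu hx
      have h3 : f w ≤ t * g u := by
        have : f w / g u ≤ t := le_max_left _ _
        calc f w = (f w / g u) * g u := by field_simp
        _ ≤ t * g u := by nlinarith
      nlinarith
    refine ⟨t, ht0, posSemidef_iff_dotProduct_mulVec.mpr ⟨(herm_smul hP.1 t).sub hS, fun x => ?_⟩⟩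
    have main : ∀ x : m → ℝ, f x ≤ t * g x := by
      intro x
      rcases eq_or_ne x 0 with rfl | hx0
      · simp [hf, hg]
      · have hxn : (0:ℝ) < ‖x‖ := norm_pos_iff.mpr hx0
        have hsx : (‖x‖⁻¹ • x) ∈ Metric.sphere (0 : m → ℝ) 1 := by
          simp [norm_smul, abs_of_pos (inv_pos.mpr hxn), inv_mul_cancel₀ hxn.ne']
        have := key _ hsx
        simp only [hf, hg] at this ⊢
        rw [quad_smul, quad_smul] at this
        have hpos : (0:ℝ) < (‖x‖⁻¹) ^ 2 := by positivity
        nlinarith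
    have := main x
    simp only [sub_mulVec, dotProduct_sub, smul_mulVec, dotProduct_smul, star_trivial]
    simpa [hf, hg, smul_eq_mul] using sub_nonneg.mpr this

lemma psd_up {Ξ S : Matrix m m ℝ} (hΞ : Ξ.PosSemidef) {t t' : ℝ} (h : t ≤ t')
    (hp : (t • Ξ - S).PosSemidef) : (t' • Ξ - S).PosSemidef := by
  have he : t' • Ξ - S = (t • Ξ - S) + (t' - t) • Ξ := by module
  rw [he]; exact hp.add (psd_smul hΞ (by linarith))

lemma single_quad (S : Matrix m m ℝ) [DecidableEq m] (i j : m) :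
    Pi.single i (1:ℝ) ⬝ᵥ S *ᵥ Pi.single j (1:ℝ) = S i j := by
  rw [mulVec_single, single_dotProduct]
  simp

lemma core [DecidableEq m] (A₀ A₁ : Matrix m m ℝ) (lam β : ℝ)
    (hlam0 : 0 ≤ lam) (hlam1 : lam ≤ 1) (hβ0 : 0 < β)
    (Ξ : Matrix m m ℝ) (hΞ : Ξ.PosDef)
    (hlyap : (Ξ - β • (lam • (A₁*Ξ*A₁ᵀ) + (1-lam) • (A₀*Ξ*A₀ᵀ))).PosDef)
    (S : Matrix m m ℝ) (hS : S.IsHermitian)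
    (heq : S = β • (lam • (A₁*S*A₁ᵀ) + (1-lam) • (A₀*S*A₀ᵀ))) : S = 0 := by
  set L : Matrix m m ℝ → Matrix m m ℝ :=
    fun Y => β • (lam • (A₁*Y*A₁ᵀ) + (1-lam) • (A₀*Y*A₀ᵀ)) with hL
  have L_psd : ∀ {Y : Matrix m m ℝ}, Y.PosSemidef → (L Y).PosSemidef := by
    intro Y hY
    have h1 : (A₁*Y*A₁ᵀ).PosSemidef := by
      rw [← conjTranspose_eq_transpose_of_trivial]
      exact hY.mul_mul_conjTranspose_same A₁
    have h0 : (A₀*Y*A₀ᵀ).PosSemidef := by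
      rw [← conjTranspose_eq_transpose_of_trivial]
      exact hY.mul_mul_conjTranspose_same A₀
    exact psd_smul ((psd_smul h1 hlam0).add (psd_smul h0 (by linarith))) hβ0.le
  have heqL : L S = S := heq.symm
  have Llin : ∀ (c : ℝ) (Y Z : Matrix m m ℝ), L (c • Y + Z) = c • L Y + L Z := by
    intro c Y Z
    simp only [hL, Matrix.mul_add, Matrix.add_mul, Matrix.mul_smul, Matrix.smul_mul]
    module
  have LlinSub : ∀ (c : ℝ) (Y Z : Matrix m m ℝ), L (c • Y - Z) = c • L Y - L Z := by
    intro c Y Z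
    have h1 := Llin c Y (-Z)
    have h2 : L (-Z) = - L Z := by
      have := Llin (-1) Z 0
      have h0 : L 0 = 0 := by simp [hL]
      rw [h0] at this
      simpa using this
    rw [h2] at h1
    simpa [sub_eq_add_neg] using h1
  -- the contraction factor
  obtain ⟨s, hs, hsD⟩ := lemA _ Ξ hlyap hΞ.1
  set D : Matrix m m ℝ := Ξ - L Ξ with hD
  set s' : ℝ := max s 2 with hs'
  have hs'2 : (2:ℝ) ≤ s' := le_max_right _ _
  have hs'0 : (0:ℝ) < s' := by linarith
  have hsD' : (s' • D - Ξ).PosSemidef := by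
    have hDpsd : D.PosSemidef := hlyap.posSemidef
    have he : s' • D - Ξ = (s • D - Ξ) + (s' - s) • D := by module
    rw [he]; exact hsD.add (psd_smul hDpsd (by simp [hs']))
  set θ : ℝ := 1 - s'⁻¹ with hθ
  have hθ0 : 0 ≤ θ := by
    have : s'⁻¹ ≤ 2⁻¹ := by
      apply inv_anti₀ <;> linarith
    rw [hθ]; norm_num at this ⊢; linarith
  have hθ1 : θ < 1 := by
    have : 0 < s'⁻¹ := inv_pos.mpr hs'0
    rw [hθ]; linarith
  have hθpsd : (θ • Ξ - L Ξ).PosSemidef := by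
    have h1 : s'⁻¹ • (s' • D - Ξ) = D - s'⁻¹ • Ξ := by
      rw [smul_sub, smul_smul, inv_mul_cancel₀ hs'0.ne', one_smul]
    have h2 : θ • Ξ - L Ξ = s'⁻¹ • (s' • D - Ξ) := by
      rw [h1, hD, hθ]; module
    rw [h2]; exact psd_smul hsD' (by positivity)
  -- initial bound
  obtain ⟨t₁, ht₁, hP1⟩ := lemA Ξ S hΞ hS
  obtain ⟨t₂, ht₂, hP2⟩ := lemA Ξ (-S) hΞ hS.neg
  set t₀ : ℝ := max t₁ t₂ with ht₀
  have ht₀0 : 0 < t₀ := lt_of_lt_of_le ht₁ (le_max_left _ _)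
  have ind : ∀ k : ℕ, ((t₀ * θ^k) • Ξ - S).PosSemidef ∧ ((t₀ * θ^k) • Ξ - (-S)).PosSemidef := by
    intro k
    induction k with
    | zero =>
      simp only [pow_zero, mul_one]
      exact ⟨psd_up hΞ.posSemidef (le_max_left _ _) hP1,
        psd_up hΞ.posSemidef (le_max_right _ _) hP2⟩
    | succ k ih =>
      have hc : 0 ≤ t₀ * θ^k := by positivity
      constructor
      · have h1 := L_psd ih.1
        rw [LlinSub] at h1
        have h2 : (t₀ * θ^(k+1)) • Ξ - S
            = (t₀ * θ^k) • (θ • Ξ - L Ξ) + ((t₀ * θ^k) • L Ξ - L S) := by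
          rw [heqL, pow_succ]; module
        rw [h2]
        exact (psd_smul hθpsd hc).add h1
      · have h1 := L_psd ih.2
        rw [LlinSub] at h1
        have h2 : (t₀ * θ^(k+1)) • Ξ - (-S)
            = (t₀ * θ^k) • (θ • Ξ - L Ξ) + ((t₀ * θ^k) • L Ξ - L (-S)) := by
          have hLS : L (-S) = -S := by
            have := LlinSub 1 0 S
            simp only [one_smul, zero_sub] at this
            have h0 : L 0 = 0 := by simp [hL]
            rw [h0, zero_sub] at this
            rw [this, heqL]
          rw [hLS, pow_succ]; module
        rw [h2]
        exact (psd_smul hθpsd hc).add h1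
  -- quadratic form vanishes
  have quad0 : ∀ x : m → ℝ, x ⬝ᵥ S *ᵥ x = 0 := by
    intro x
    have hb : ∀ (T : Matrix m m ℝ), (∀ k : ℕ, ((t₀ * θ^k) • Ξ - T).PosSemidef)
        → x ⬝ᵥ T *ᵥ x ≤ 0 := by
      intro T hT
      have hle : ∀ k : ℕ, x ⬝ᵥ T *ᵥ x ≤ (t₀ * θ^k) * (x ⬝ᵥ Ξ *ᵥ x) := by
        intro k
        have := (hT k).dotProduct_mulVec_nonneg x
        simp only [star_trivial, sub_mulVec, dotProduct_sub, smul_mulVec,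
          dotProduct_smul, smul_eq_mul] at this
        linarith
      have htend : Filter.Tendsto (fun k : ℕ => (t₀ * θ^k) * (x ⬝ᵥ Ξ *ᵥ x))
          Filter.atTop (nhds 0) := by
        have h0 := tendsto_pow_atTop_nhds_zero_of_lt_one hθ0 hθ1
        have := (h0.const_mul t₀).mul_const (x ⬝ᵥ Ξ *ᵥ x)
        simpa using this
      exact ge_of_tendsto' htend hle
    have h1 := hb S (fun k => (ind k).1)
    have h2 := hb (-S) (fun k => (ind k).2)
    simp only [neg_mulVec, dotProduct_neg] at h2
    linarith
  -- polarization
  ext i j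
  have hdiag : ∀ i : m, S i i = 0 := by
    intro i
    have := quad0 (Pi.single i 1)
    rwa [single_quad] at this
  have hij := quad0 (Pi.single i 1 + Pi.single j 1)
  rw [mulVec_add, dotProduct_add, add_dotProduct, add_dotProduct,
    single_quad, single_quad, single_quad, single_quad, hdiag, hdiag] at hij
  have hsym : S j i = S i j := by
    have := hS.apply i j
    simpa using this
  simp only [Matrix.zero_apply]
  linarith [hij, hsym]

lemma blockdiag_posdef {P : Matrix m m ℝ} (hP : P.PosDef) :
    (fromBlocks P 0 0 P).PosDef := by
  refine posDef_iff_dotProduct_mulVec.mpr ⟨?_, ?_⟩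
  · unfold Matrix.IsHermitian
    rw [fromBlocks_conjTranspose, hP.1.eq]
    simp
  · intro x hx
    have hquad : star x ⬝ᵥ (fromBlocks P 0 0 P *ᵥ x)
        = (x ∘ Sum.inl) ⬝ᵥ (P *ᵥ (x ∘ Sum.inl)) + (x ∘ Sum.inr) ⬝ᵥ (P *ᵥ (x ∘ Sum.inr)) := by
      rw [fromBlocks_mulVec]
      simp [dotProduct, Fintype.sum_sum_type]
    rw [hquad]
    have hcases : x ∘ Sum.inl ≠ 0 ∨ x ∘ Sum.inr ≠ 0 := by
      by_contra h
      push_neg at h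
      apply hx
      funext i
      cases i with
      | inl i => exact congrFun h.1 i
      | inr i => exact congrFun h.2 i
    rcases hcases with h | h
    · have h1 := hP.dotProduct_mulVec_pos h
      have h2 := hP.posSemidef.dotProduct_mulVec_nonneg (x ∘ Sum.inr)
      simp only [star_trivial] at h1 h2
      linarith
    · have h1 := hP.posSemidef.dotProduct_mulVec_nonneg (x ∘ Sum.inl)
      have h2 := hP.dotProduct_mulVec_pos h
      simp only [star_trivial] at h1 h2
      linarith

lemma kron_mulVec {n : ℕ} (A B : Matrix (Fin n) (Fin n) ℝ) (v : Fin n × Fin n → ℝ) (i j : Fin n) :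
    ((A ⊗ₖ B) *ᵥ v) (i, j) = (A * (Matrix.of fun k l => v (k, l)) * Bᵀ) i j := by
  simp only [mulVec, dotProduct, Matrix.mul_apply, kroneckerMap_apply, transpose_apply, of_apply,
    Fintype.sum_prod_type, Finset.sum_mul]
  rw [Finset.sum_comm]
  refine Finset.sum_congr rfl fun k _ => Finset.sum_congr rfl fun l _ => by ring

lemma fromBlocks_sub' {l o : Type*} (A A' : Matrix l l ℝ) (B B' : Matrix l o ℝ)
    (C C' : Matrix o l ℝ) (D D' : Matrix o o ℝ) :
    fromBlocks A B C D - fromBlocks A' B' C' D'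
      = fromBlocks (A - A') (B - B') (C - C') (D - D') := by
  rw [sub_eq_add_neg, fromBlocks_neg, fromBlocks_add]
  simp [sub_eq_add_neg]


/-- A Lyapunov certificate for the discounted mean-square Lyapunov operator implies
invertibility of `I - β(λ A₁⊗A₁ + (1-λ) A₀⊗A₀)`. -/
theorem stmt6 (n : ℕ) (A₀ A₁ : Matrix (Fin n) (Fin n) ℝ)
    (lam : ℝ) (hlam0 : 0 ≤ lam) (hlam1 : lam ≤ 1)
    (β : ℝ) (hβ0 : 0 < β) (hβ1 : β ≤ 1)
    (Ξ : Matrix (Fin n) (Fin n) ℝ) (hΞ : Ξ.PosDef)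
    (hlyap : (Ξ - β • (lam • (A₁ * Ξ * A₁ᵀ) + (1 - lam) • (A₀ * Ξ * A₀ᵀ))).PosDef) :
    IsUnit ((1 : Matrix (Fin n × Fin n) (Fin n × Fin n) ℝ)
      - β • (lam • (A₁ ⊗ₖ A₁) + (1 - lam) • (A₀ ⊗ₖ A₀))) := by
  by_contra hunit
  -- get a kernel vector
  set M := (1 : Matrix (Fin n × Fin n) (Fin n × Fin n) ℝ)
      - β • (lam • (A₁ ⊗ₖ A₁) + (1 - lam) • (A₀ ⊗ₖ A₀)) with hM
  have hdet : M.det = 0 := by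
    by_contra hd
    exact hunit ((Matrix.isUnit_iff_isUnit_det M).mpr (isUnit_iff_ne_zero.mpr hd))
  obtain ⟨v, hv0, hv⟩ := (Matrix.exists_mulVec_eq_zero_iff).mpr hdet
  set X : Matrix (Fin n) (Fin n) ℝ := Matrix.of fun k l => v (k, l) with hX
  -- matrix fixed point equation
  have heqX : X = β • (lam • (A₁ * X * A₁ᵀ) + (1 - lam) • (A₀ * X * A₀ᵀ)) := by
    have hveq : v = (β • (lam • (A₁ ⊗ₖ A₁) + (1 - lam) • (A₀ ⊗ₖ A₀))) *ᵥ v := by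
      rw [hM, sub_mulVec, one_mulVec] at hv
      exact sub_eq_zero.mp hv
    ext i j
    have h2 := congrFun hveq (i, j)
    rw [smul_mulVec, add_mulVec, smul_mulVec, smul_mulVec] at h2
    simp only [Pi.smul_apply, Pi.add_apply, smul_eq_mul] at h2
    rw [kron_mulVec, kron_mulVec] at h2
    simpa [hX] using h2
  have heqXT : Xᵀ = β • (lam • (A₁ * Xᵀ * A₁ᵀ) + (1 - lam) • (A₀ * Xᵀ * A₀ᵀ)) := by
    calc Xᵀ = (β • (lam • (A₁ * X * A₁ᵀ) + (1 - lam) • (A₀ * X * A₀ᵀ)))ᵀ := by rw [← heqX]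
    _ = β • (lam • (A₁ * Xᵀ * A₁ᵀ) + (1 - lam) • (A₀ * Xᵀ * A₀ᵀ)) := by
        simp only [transpose_smul, transpose_add, transpose_mul, transpose_transpose,
          Matrix.mul_assoc]
  -- block matrices
  set B₀ : Matrix (Fin n ⊕ Fin n) (Fin n ⊕ Fin n) ℝ := fromBlocks A₀ 0 0 A₀ with hB₀
  set B₁ : Matrix (Fin n ⊕ Fin n) (Fin n ⊕ Fin n) ℝ := fromBlocks A₁ 0 0 A₁ with hB₁
  set Xi2 : Matrix (Fin n ⊕ Fin n) (Fin n ⊕ Fin n) ℝ := fromBlocks Ξ 0 0 Ξ with hXi2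
  set S2 : Matrix (Fin n ⊕ Fin n) (Fin n ⊕ Fin n) ℝ := fromBlocks 0 X Xᵀ 0 with hS2
  have conj_block : ∀ (A : Matrix (Fin n) (Fin n) ℝ) (P Q R T : Matrix (Fin n) (Fin n) ℝ),
      fromBlocks A 0 0 A * fromBlocks P Q R T * (fromBlocks A 0 0 A)ᵀ
        = fromBlocks (A*P*Aᵀ) (A*Q*Aᵀ) (A*R*Aᵀ) (A*T*Aᵀ) := by
    intro A P Q R T
    rw [fromBlocks_transpose, fromBlocks_multiply, fromBlocks_multiply]
    simp
  have smul_block : ∀ (c : ℝ) (P Q R T : Matrix (Fin n) (Fin n) ℝ),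
      c • fromBlocks P Q R T = fromBlocks (c • P) (c • Q) (c • R) (c • T) := by
    intro c P Q R T
    rw [fromBlocks_smul]
  have hXi2pd : Xi2.PosDef := blockdiag_posdef hΞ
  have hlyap' : (Xi2 - β • (lam • (B₁ * Xi2 * B₁ᵀ) + (1 - lam) • (B₀ * Xi2 * B₀ᵀ))).PosDef := by
    have he : Xi2 - β • (lam • (B₁ * Xi2 * B₁ᵀ) + (1 - lam) • (B₀ * Xi2 * B₀ᵀ))
        = fromBlocks (Ξ - β • (lam • (A₁ * Ξ * A₁ᵀ) + (1 - lam) • (A₀ * Ξ * A₀ᵀ))) 0 0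
            (Ξ - β • (lam • (A₁ * Ξ * A₁ᵀ) + (1 - lam) • (A₀ * Ξ * A₀ᵀ))) := by
      rw [hB₀, hB₁, hXi2, conj_block, conj_block, smul_block, smul_block, fromBlocks_add,
        smul_block, fromBlocks_sub']
      simp
    rw [he]
    exact blockdiag_posdef hlyap
  have hS2herm : S2.IsHermitian := by
    unfold Matrix.IsHermitian
    rw [conjTranspose_eq_transpose_of_trivial, hS2, fromBlocks_transpose]
    simp
  have hS2eq : S2 = β • (lam • (B₁ * S2 * B₁ᵀ) + (1 - lam) • (B₀ * S2 * B₀ᵀ)) := by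
    rw [hB₀, hB₁, hS2, conj_block, conj_block, smul_block, smul_block, fromBlocks_add, smul_block]
    simp only [Matrix.mul_zero, Matrix.zero_mul, smul_zero, add_zero, zero_add]
    rw [← heqX, ← heqXT]
  have hS20 : S2 = 0 := core B₀ B₁ lam β hlam0 hlam1 hβ0 Xi2 hXi2pd hlyap' S2 hS2herm hS2eq
  apply hv0
  funext p
  have : X p.1 p.2 = 0 := by
    have := congrFun (congrFun hS20 (Sum.inl p.1)) (Sum.inr p.2)
    simpa [hS2, fromBlocks] using this
  simpa [hX] using this
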